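/- Let y : (0, ∞) → ℝ be differentiable with y(t) ≠ 0 and y(t) ≠ 1 for all t > 0, and suppose y satisfies the Riccati equation t·y'(t) = (1/3)·y(t)² − t·y(t) − 1/3 for all t > 0. Then y is twice differentiable on (0, ∞) and satisfies the Painlevé V equation y''(t) = (1/(2y) + 1/(y−1))·(y')² − y'/t + (y−1)²(y²−1)/(18 t² y) − y/(3t) − y(y+1)/(2(y−1)) for all t > 0 (that is, Painlevé V with parameters α = 1/18, β = −1/18, γ = −1/3, δ = −1/2). -/

import Mathlib

/-- A solution of the Riccati equation `t y' = y²/3 − t y − 1/3` on `(0,∞)`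
(avoiding the values 0 and 1) is twice differentiable and satisfies the Painlevé V
equation with parameters `(α, β, γ, δ) = (1/18, −1/18, −1/3, −1/2)`. -/
theorem statement13 (y : ℝ → ℝ)
    (hy : ∀ t : ℝ, 0 < t → DifferentiableAt ℝ y t)
    (hy0 : ∀ t : ℝ, 0 < t → y t ≠ 0)
    (hy1 : ∀ t : ℝ, 0 < t → y t ≠ 1)
    (hric : ∀ t : ℝ, 0 < t →
      t * deriv y t = (1/3) * (y t)^2 - t * y t - 1/3) :
    ∀ t : ℝ, 0 < t → DifferentiableAt ℝ (deriv y) t ∧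
      deriv (deriv y) t =
        (1 / (2 * y t) + 1 / (y t - 1)) * (deriv y t)^2 - deriv y t / t
          + (y t - 1)^2 * ((y t)^2 - 1) / (18 * t^2 * y t)
          - y t / (3 * t) - y t * (y t + 1) / (2 * (y t - 1)) := by
  intro t ht
  have ht' : t ≠ 0 := ne_of_gt ht
  set f : ℝ → ℝ := fun s => ((1/3) * (y s)^2 - s * y s - 1/3) / s with hf
  have heq : deriv y =ᶠ[nhds t] f := by
    filter_upwards [IsOpen.mem_nhds isOpen_Ioi (Set.mem_Ioi.mpr ht)] with s hs
    have hs0 : (s : ℝ) ≠ 0 := ne_of_gt hs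
    have := hric s hs
    show deriv y s = ((1/3) * (y s)^2 - s * y s - 1/3) / s
    rw [eq_div_iff hs0]
    linarith
  set d := deriv y t with hd
  have hy' : HasDerivAt y d t := (hy t ht).hasDerivAt
  have hnum : HasDerivAt (fun s => (1/3) * (y s)^2 - s * y s - 1/3)
      ((1/3) * (2 * y t * d) - (1 * y t + t * d)) t := by
    have h1 : HasDerivAt (fun s => (y s)^2) (2 * y t * d) t := by
      have := hy'.fun_pow 2
      simpa [mul_comm, mul_assoc, mul_left_comm] using this
    exact ((h1.const_mul (1/3 : ℝ)).sub ((hasDerivAt_id t).mul hy')).sub_const _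
  have hden : HasDerivAt (fun s : ℝ => s) 1 t := hasDerivAt_id t
  have hF : HasDerivAt f
      ((((1/3) * (2 * y t * d) - (1 * y t + t * d)) * t -
        ((1/3) * (y t)^2 - t * y t - 1/3) * 1) / t^2) t := hnum.div hden ht'
  have hdiff : DifferentiableAt ℝ (deriv y) t :=
    hF.differentiableAt.congr_of_eventuallyEq heq
  refine ⟨hdiff, ?_⟩
  have hderiv2 : deriv (deriv y) t =
      (((1/3) * (2 * y t * d) - (1 * y t + t * d)) * t -
        ((1/3) * (y t)^2 - t * y t - 1/3) * 1) / t^2 := by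
    rw [heq.deriv_eq, hF.deriv]
  rw [hderiv2]
  have hdval : d = ((1/3) * (y t)^2 - t * y t - 1/3) / t := by
    have := hric t ht
    field_simp
    linarith
  rw [hdval]
  have h0 := hy0 t ht
  have h1 := hy1 t ht
  have h1' : y t - 1 ≠ 0 := sub_ne_zero.mpr h1
  field_simp
  ring
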